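/- (Second-order effect of one QAOA level on an arbitrary state.) For every cost function c : (Fin n → Bool) → ℝ and every unit vector ψ : (Fin n → Bool) → ℂ, define g(γ,β) := Re(star(Q(γ,β) *ᵥ ψ) ⬝ᵥ (C *ᵥ (Q(γ,β) *ᵥ ψ))) where Q(γ,β) := exp(−(iβ)•B)·exp(−(iγ)•C). Then the function (γ,β) ↦ g(γ,β) − Re⟨C⟩_ψ − β·Re⟨i•∇C⟩_ψ + (β²/2)·Re⟨∇²C⟩_ψ + γβ·Re⟨∇_C∇C⟩_ψ is O((|γ|+|β|)³) as (γ,β) → (0,0), where ⟨A⟩_ψ := star ψ ⬝ᵥ (A *ᵥ ψ). -/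

import Mathlib

open Matrix Asymptotics

noncomputable section

abbrev Bits (n : ℕ) := Fin n → Bool

/-- `x` with bit `j` flipped. -/
def flipBit {n : ℕ} (j : Fin n) (x : Bits n) : Bits n := Function.update x j (!x j)

/-- The bit-flip operator `X_j`. -/
def Xop {n : ℕ} (j : Fin n) : Matrix (Bits n) (Bits n) ℂ :=
  fun x y => if y = flipBit j x then 1 else 0

/-- The transverse-field mixing Hamiltonian `B = ∑ⱼ Xⱼ`. -/
def Bop (n : ℕ) : Matrix (Bits n) (Bits n) ℂ := ∑ j : Fin n, Xop j

/-- The cost Hamiltonian: diagonal matrix with entries `c x`. -/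
def Cop {n : ℕ} (c : Bits n → ℝ) : Matrix (Bits n) (Bits n) ℂ :=
  Matrix.diagonal fun x => (c x : ℂ)

/-- The gradient superoperator `∇A = [B, A]`. -/
def gradB {n : ℕ} (A : Matrix (Bits n) (Bits n) ℂ) : Matrix (Bits n) (Bits n) ℂ :=
  Bop n * A - A * Bop n

/-- The gradient with respect to the cost Hamiltonian `∇_C A = [C, A]`. -/
def gradC {n : ℕ} (c : Bits n → ℝ) (A : Matrix (Bits n) (Bits n) ℂ) :
    Matrix (Bits n) (Bits n) ℂ :=
  Cop c * A - A * Cop c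

/-- The uniform superposition state `|s⟩`, every entry `(2^n)^{-1/2}`. -/
def sVec (n : ℕ) : Bits n → ℂ := fun _ => ((Real.sqrt (2 ^ n))⁻¹ : ℝ)

/-- Initial-state expectation value `⟨A⟩₀ = ⟨s|A|s⟩`. -/
def expect0 {n : ℕ} (A : Matrix (Bits n) (Bits n) ℂ) : ℂ :=
  star (sVec n) ⬝ᵥ (A *ᵥ sVec n)

/-- Partial cost difference `∂ⱼc(x) = c(x⁽ʲ⁾) − c(x)`. -/
def pd {n : ℕ} (c : Bits n → ℝ) (j : Fin n) (x : Bits n) : ℝ := c (flipBit j x) - c x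

/-- Cost divergence `dc(x) = ∑ⱼ ∂ⱼc(x)`. -/
def dcFun {n : ℕ} (c : Bits n → ℝ) (x : Bits n) : ℝ := ∑ j : Fin n, pd c j x

/-- The QAOA₁ operator `Q(γ,β) = exp(−iβB)·exp(−iγC)`. -/
def Qaoa1 {n : ℕ} (c : Bits n → ℝ) (γ β : ℝ) : Matrix (Bits n) (Bits n) ℂ :=
  NormedSpace.exp ((-(Complex.I * (β : ℂ))) • Bop n) *
    NormedSpace.exp ((-(Complex.I * (γ : ℂ))) • Cop c)

/-- Probability of measuring the bitstring `x` in the QAOA₁ state. -/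
def P1 {n : ℕ} (c : Bits n → ℝ) (x : Bits n) (γ β : ℝ) : ℝ :=
  ‖(Qaoa1 c γ β *ᵥ sVec n) x‖ ^ 2

/-- The QAOA₁ cost expectation value `⟨C⟩₁(γ,β)`. -/
def expC1 {n : ℕ} (c : Bits n → ℝ) (γ β : ℝ) : ℝ :=
  (star (Qaoa1 c γ β *ᵥ sVec n) ⬝ᵥ (Cop c *ᵥ (Qaoa1 c γ β *ᵥ sVec n))).re

section Stmt18Aux

open NormedSpace Nat

attribute [local instance] Matrix.linftyOpNormedRing Matrix.linftyOpNormedAlgebra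

set_option maxHeartbeats 2000000

variable {n : ℕ}

private lemma exp_tail (A : Matrix (Bits n) (Bits n) ℂ) (m : ℕ) :
    ∃ K : ℝ, 0 ≤ K ∧ ∀ z : ℂ, ‖z‖ ≤ 1 →
      ‖exp (z • A) - ∑ k ∈ Finset.range m, ((k ! : ℂ))⁻¹ • (z • A) ^ k‖ ≤ K * ‖z‖ ^ m := by
  have hg0 : ∀ k : ℕ, 0 ≤ ((k ! : ℝ))⁻¹ * ‖A‖ ^ k := fun k => by positivity
  refine ⟨(∑' k : ℕ, ((k ! : ℝ))⁻¹ * ‖A‖ ^ k) * ‖A‖ ^ m,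
    mul_nonneg (tsum_nonneg hg0) (by positivity), ?_⟩
  intro z hz
  set x := z • A with hx
  have hsum : Summable (fun k : ℕ => ((k ! : ℂ))⁻¹ • x ^ k) := expSeries_summable' (𝕂 := ℂ) x
  have htail : exp x - ∑ k ∈ Finset.range m, ((k ! : ℂ))⁻¹ • x ^ k
      = ∑' k : ℕ, (((k + m)! : ℂ))⁻¹ • x ^ (k + m) := by
    rw [exp_eq_tsum ℂ]
    beta_reduce
    rw [← hsum.sum_add_tsum_nat_add m]
    abel
  rw [htail]
  have hxe : ‖x‖ = ‖z‖ * ‖A‖ := norm_smul _ _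
  have hbound : ∀ k : ℕ, ‖(((k + m)! : ℂ))⁻¹ • x ^ (k + m)‖
      ≤ ((k ! : ℝ))⁻¹ * ‖A‖ ^ k * (‖A‖ ^ m * ‖z‖ ^ m) := by
    intro k
    rw [norm_smul, norm_inv, Complex.norm_natCast]
    have h1 : ‖x ^ (k + m)‖ ≤ ‖A‖ ^ k * (‖A‖ ^ m * ‖z‖ ^ m) := by
      calc ‖x ^ (k + m)‖ ≤ ‖x‖ ^ (k + m) := norm_pow_le _ _
        _ = ‖z‖ ^ (k + m) * ‖A‖ ^ (k + m) := by rw [hxe, mul_pow]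
        _ ≤ ‖z‖ ^ m * ‖A‖ ^ (k + m) :=
            mul_le_mul_of_nonneg_right
              (pow_le_pow_of_le_one (norm_nonneg z) hz (Nat.le_add_left m k)) (by positivity)
        _ = ‖A‖ ^ k * (‖A‖ ^ m * ‖z‖ ^ m) := by rw [pow_add]; ring
    have h2 : (((k + m)! : ℝ))⁻¹ ≤ ((k ! : ℝ))⁻¹ := by
      apply inv_anti₀
      · exact_mod_cast Nat.factorial_pos k
      · exact_mod_cast Nat.factorial_le (Nat.le_add_right k m)
    calc (((k + m)! : ℝ))⁻¹ * ‖x ^ (k + m)‖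
        ≤ ((k ! : ℝ))⁻¹ * (‖A‖ ^ k * (‖A‖ ^ m * ‖z‖ ^ m)) := by
          apply mul_le_mul h2 h1 (norm_nonneg _) (by positivity)
      _ = ((k ! : ℝ))⁻¹ * ‖A‖ ^ k * (‖A‖ ^ m * ‖z‖ ^ m) := by ring
  have hsumnorm : Summable (fun k : ℕ => ‖(((k + m)! : ℂ))⁻¹ • x ^ (k + m)‖) :=
    (summable_nat_add_iff m).2 (norm_expSeries_summable' (𝕂 := ℂ) x)
  have hsumg : Summable (fun k : ℕ => ((k ! : ℝ))⁻¹ * ‖A‖ ^ k * (‖A‖ ^ m * ‖z‖ ^ m)) := by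
    apply Summable.mul_right
    exact (Real.summable_pow_div_factorial ‖A‖).congr fun k => by
      rw [div_eq_mul_inv, mul_comm]
  calc ‖∑' k : ℕ, (((k + m)! : ℂ))⁻¹ • x ^ (k + m)‖
      ≤ ∑' k : ℕ, ‖(((k + m)! : ℂ))⁻¹ • x ^ (k + m)‖ := norm_tsum_le_tsum_norm hsumnorm
    _ ≤ ∑' k : ℕ, ((k ! : ℝ))⁻¹ * ‖A‖ ^ k * (‖A‖ ^ m * ‖z‖ ^ m) :=
        Summable.tsum_le_tsum hbound hsumnorm hsumg
    _ = (∑' k : ℕ, ((k ! : ℝ))⁻¹ * ‖A‖ ^ k) * (‖A‖ ^ m * ‖z‖ ^ m) := tsum_mul_right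
    _ = (∑' k : ℕ, ((k ! : ℝ))⁻¹ * ‖A‖ ^ k) * ‖A‖ ^ m * ‖z‖ ^ m := by ring

private lemma exp_norm_le (A : Matrix (Bits n) (Bits n) ℂ) :
    ∃ K : ℝ, 0 ≤ K ∧ ∀ z : ℂ, ‖z‖ ≤ 1 → ‖exp (z • A)‖ ≤ K := by
  obtain ⟨K, hK0, hK⟩ := exp_tail A 0
  exact ⟨K, hK0, fun z hz => by simpa using hK z hz⟩

private lemma exp_approx0 (A : Matrix (Bits n) (Bits n) ℂ) :
    ∃ K : ℝ, 0 ≤ K ∧ ∀ z : ℂ, ‖z‖ ≤ 1 → ‖exp (z • A) - 1‖ ≤ K * ‖z‖ := by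
  obtain ⟨K, hK0, hK⟩ := exp_tail A 1
  exact ⟨K, hK0, fun z hz => by simpa using hK z hz⟩

private lemma exp_approx1 (A : Matrix (Bits n) (Bits n) ℂ) :
    ∃ K : ℝ, 0 ≤ K ∧ ∀ z : ℂ, ‖z‖ ≤ 1 →
      ‖exp (z • A) - (1 + z • A)‖ ≤ K * ‖z‖ ^ 2 := by
  obtain ⟨K, hK0, hK⟩ := exp_tail A 2
  refine ⟨K, hK0, fun z hz => ?_⟩
  have := hK z hz
  rw [show ∑ k ∈ Finset.range 2, ((k ! : ℂ))⁻¹ • (z • A) ^ k = 1 + z • A by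
    simp [Finset.sum_range_succ]] at this
  exact this

private lemma exp_approx2 (A : Matrix (Bits n) (Bits n) ℂ) :
    ∃ K : ℝ, 0 ≤ K ∧ ∀ z : ℂ, ‖z‖ ≤ 1 →
      ‖exp (z • A) - (1 + z • A + (z ^ 2 / 2) • (A * A))‖ ≤ K * ‖z‖ ^ 3 := by
  obtain ⟨K, hK0, hK⟩ := exp_tail A 3
  refine ⟨K, hK0, fun z hz => ?_⟩
  have := hK z hz
  rw [show ∑ k ∈ Finset.range 3, ((k ! : ℂ))⁻¹ • (z • A) ^ k
      = 1 + z • A + (z ^ 2 / 2) • (A * A) by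
    simp [Finset.sum_range_succ, smul_pow, smul_smul, sq]
    congr 1
    ring] at this
  exact this

/-- Zeroth order conjugation bound. -/
private lemma conj0 (A M : Matrix (Bits n) (Bits n) ℂ) :
    ∃ K : ℝ, 0 ≤ K ∧ ∀ z : ℂ, ‖z‖ ≤ 1 →
      ‖exp (z • A) * M * exp ((-z) • A) - M‖ ≤ K * ‖z‖ := by
  obtain ⟨K0, hK00, hK0⟩ := exp_norm_le A
  obtain ⟨K1, hK10, hK1⟩ := exp_approx0 A
  refine ⟨K1 * (‖M‖ * K0) + ‖M‖ * K1, by positivity, fun z hz => ?_⟩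
  have hz' : ‖-z‖ ≤ 1 := by simpa using hz
  set E := exp (z • A) with hE
  set E' := exp ((-z) • A) with hE'
  have hid : E * M * E' - M = (E - 1) * (M * E') + M * (E' - 1) := by noncomm_ring
  rw [hid]
  have b1 : ‖(E - 1) * (M * E')‖ ≤ K1 * ‖z‖ * (‖M‖ * K0) := by
    refine (norm_mul_le _ _).trans ?_
    exact mul_le_mul (hK1 z hz)
      ((norm_mul_le _ _).trans (mul_le_mul_of_nonneg_left (hK0 _ hz') (norm_nonneg M)))
      (norm_nonneg _) (by positivity)
  have b2 : ‖M * (E' - 1)‖ ≤ ‖M‖ * (K1 * ‖z‖) := by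
    refine (norm_mul_le _ _).trans ?_
    refine mul_le_mul_of_nonneg_left ?_ (norm_nonneg M)
    have h := hK1 (-z) hz'
    rwa [norm_neg] at h
  calc ‖(E - 1) * (M * E') + M * (E' - 1)‖
      ≤ ‖(E - 1) * (M * E')‖ + ‖M * (E' - 1)‖ := norm_add_le _ _
    _ ≤ K1 * ‖z‖ * (‖M‖ * K0) + ‖M‖ * (K1 * ‖z‖) := add_le_add b1 b2
    _ = (K1 * (‖M‖ * K0) + ‖M‖ * K1) * ‖z‖ := by ring

/-- First order conjugation bound. -/
private lemma conj1 (A M : Matrix (Bits n) (Bits n) ℂ) :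
    ∃ K : ℝ, 0 ≤ K ∧ ∀ z : ℂ, ‖z‖ ≤ 1 →
      ‖exp (z • A) * M * exp ((-z) • A) - (M + z • (A * M - M * A))‖ ≤ K * ‖z‖ ^ 2 := by
  obtain ⟨K0, hK00, hK0⟩ := exp_norm_le A
  obtain ⟨K1, hK10, hK1⟩ := exp_approx1 A
  refine ⟨K1 * (‖M‖ * K0) + (1 + ‖A‖) * ‖M‖ * K1 + ‖A * (M * A)‖, by positivity, fun z hz => ?_⟩
  have hz' : ‖-z‖ ≤ 1 := by simpa using hz
  set E := exp (z • A) with hE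
  set E' := exp ((-z) • A) with hE'
  have hid : E * M * E' - (M + z • (A * M - M * A))
      = (E - (1 + z • A)) * (M * E') + ((1 + z • A) * M) * (E' - (1 + (-z) • A))
        + (-(z * z)) • (A * (M * A)) := by
    simp only [sub_mul, mul_sub, add_mul, mul_add, one_mul, mul_one, smul_mul_assoc,
      mul_smul_comm, neg_smul, smul_smul, smul_sub, smul_add, mul_neg, neg_mul, smul_neg,
      neg_neg, mul_assoc]
    module
  rw [hid]
  have hS : ‖(1 : Matrix (Bits n) (Bits n) ℂ) + z • A‖ ≤ 1 + ‖A‖ := by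
    refine (norm_add_le _ _).trans ?_
    rw [norm_one, norm_smul]
    have : ‖z‖ * ‖A‖ ≤ 1 * ‖A‖ := by gcongr
    linarith
  have b1 : ‖(E - (1 + z • A)) * (M * E')‖ ≤ K1 * ‖z‖ ^ 2 * (‖M‖ * K0) := by
    refine (norm_mul_le _ _).trans ?_
    exact mul_le_mul (hK1 z hz)
      ((norm_mul_le _ _).trans (mul_le_mul_of_nonneg_left (hK0 _ hz') (norm_nonneg M)))
      (norm_nonneg _) (by positivity)
  have b2 : ‖((1 + z • A) * M) * (E' - (1 + (-z) • A))‖ ≤ (1 + ‖A‖) * ‖M‖ * (K1 * ‖z‖ ^ 2) := by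
    refine (norm_mul_le _ _).trans ?_
    refine mul_le_mul ((norm_mul_le _ _).trans (mul_le_mul_of_nonneg_right hS (norm_nonneg M)))
      ?_ (norm_nonneg _) (by positivity)
    have h := hK1 (-z) hz'
    rwa [norm_neg] at h
  have b3 : ‖(-(z * z)) • (A * (M * A))‖ ≤ ‖A * (M * A)‖ * ‖z‖ ^ 2 := by
    rw [norm_smul, norm_neg, norm_mul]
    rw [show ‖z‖ * ‖z‖ = ‖z‖ ^ 2 by ring]
    rw [mul_comm]
  calc ‖(E - (1 + z • A)) * (M * E') + ((1 + z • A) * M) * (E' - (1 + (-z) • A))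
        + (-(z * z)) • (A * (M * A))‖
      ≤ ‖(E - (1 + z • A)) * (M * E') + ((1 + z • A) * M) * (E' - (1 + (-z) • A))‖
        + ‖(-(z * z)) • (A * (M * A))‖ := norm_add_le _ _
    _ ≤ ‖(E - (1 + z • A)) * (M * E')‖ + ‖((1 + z • A) * M) * (E' - (1 + (-z) • A))‖
        + ‖(-(z * z)) • (A * (M * A))‖ := by
        have := norm_add_le ((E - (1 + z • A)) * (M * E'))
          (((1 + z • A) * M) * (E' - (1 + (-z) • A)))
        linarith
    _ ≤ K1 * ‖z‖ ^ 2 * (‖M‖ * K0) + (1 + ‖A‖) * ‖M‖ * (K1 * ‖z‖ ^ 2)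
        + ‖A * (M * A)‖ * ‖z‖ ^ 2 := by linarith
    _ = (K1 * (‖M‖ * K0) + (1 + ‖A‖) * ‖M‖ * K1 + ‖A * (M * A)‖) * ‖z‖ ^ 2 := by ring

/-- Second order conjugation bound. -/
private lemma conj2 (A M : Matrix (Bits n) (Bits n) ℂ) :
    ∃ K : ℝ, 0 ≤ K ∧ ∀ z : ℂ, ‖z‖ ≤ 1 →
      ‖exp (z • A) * M * exp ((-z) • A) - (M + z • (A * M - M * A)
          + (z ^ 2 / 2) • (A * (A * M - M * A) - (A * M - M * A) * A))‖ ≤ K * ‖z‖ ^ 3 := by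
  obtain ⟨K0, hK00, hK0⟩ := exp_norm_le A
  obtain ⟨K2, hK20, hK2⟩ := exp_approx2 A
  refine ⟨K2 * (‖M‖ * K0) + (1 + ‖A‖ + ‖A‖ * ‖A‖) * ‖M‖ * K2
    + ‖A * (M * (A * A)) - A * (A * (M * A))‖ + ‖A * (A * (M * (A * A)))‖,
    by positivity, fun z hz => ?_⟩
  have hz' : ‖-z‖ ≤ 1 := by simpa using hz
  set E := exp (z • A) with hE
  set E' := exp ((-z) • A) with hE'
  have hid : E * M * E' - (M + z • (A * M - M * A)
        + (z ^ 2 / 2) • (A * (A * M - M * A) - (A * M - M * A) * A))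
      = (E - (1 + z • A + (z ^ 2 / 2) • (A * A))) * (M * E')
        + ((1 + z • A + (z ^ 2 / 2) • (A * A)) * M)
            * (E' - (1 + (-z) • A + ((-z) ^ 2 / 2) • (A * A)))
        + (z ^ 2 * z / 2) • (A * (M * (A * A)) - A * (A * (M * A)))
        + (z ^ 2 * z ^ 2 / 4) • (A * (A * (M * (A * A)))) := by
    simp only [sub_mul, mul_sub, add_mul, mul_add, one_mul, mul_one, smul_mul_assoc,
      mul_smul_comm, neg_smul, smul_smul, smul_sub, smul_add, mul_neg, neg_mul, smul_neg,
      neg_neg, mul_assoc]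
    module
  rw [hid]
  have hS : ‖(1 : Matrix (Bits n) (Bits n) ℂ) + z • A + (z ^ 2 / 2) • (A * A)‖
      ≤ 1 + ‖A‖ + ‖A‖ * ‖A‖ := by
    refine (norm_add_le _ _).trans ?_
    have h1 : ‖(1 : Matrix (Bits n) (Bits n) ℂ) + z • A‖ ≤ 1 + ‖A‖ := by
      refine (norm_add_le _ _).trans ?_
      rw [norm_one, norm_smul]
      have : ‖z‖ * ‖A‖ ≤ 1 * ‖A‖ := by gcongr
      linarith
    have h2 : ‖(z ^ 2 / 2) • (A * A)‖ ≤ ‖A‖ * ‖A‖ := by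
      rw [norm_smul]
      have hz2 : ‖z ^ 2 / 2‖ ≤ 1 := by
        simp only [norm_div, norm_pow, Complex.norm_ofNat]
        nlinarith [norm_nonneg z]
      calc ‖z ^ 2 / 2‖ * ‖A * A‖ ≤ 1 * (‖A‖ * ‖A‖) :=
            mul_le_mul hz2 (norm_mul_le _ _) (norm_nonneg _) one_pos.le
        _ = ‖A‖ * ‖A‖ := one_mul _
    linarith
  have b1 : ‖(E - (1 + z • A + (z ^ 2 / 2) • (A * A))) * (M * E')‖
      ≤ K2 * ‖z‖ ^ 3 * (‖M‖ * K0) := by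
    refine (norm_mul_le _ _).trans ?_
    exact mul_le_mul (hK2 z hz)
      ((norm_mul_le _ _).trans (mul_le_mul_of_nonneg_left (hK0 _ hz') (norm_nonneg M)))
      (norm_nonneg _) (by positivity)
  have b2 : ‖((1 + z • A + (z ^ 2 / 2) • (A * A)) * M)
        * (E' - (1 + (-z) • A + ((-z) ^ 2 / 2) • (A * A)))‖
      ≤ (1 + ‖A‖ + ‖A‖ * ‖A‖) * ‖M‖ * (K2 * ‖z‖ ^ 3) := by
    refine (norm_mul_le _ _).trans ?_
    refine mul_le_mul ((norm_mul_le _ _).trans (mul_le_mul_of_nonneg_right hS (norm_nonneg M)))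
      ?_ (norm_nonneg _) (by positivity)
    have h := hK2 (-z) hz'
    rwa [norm_neg] at h
  have b3 : ‖(z ^ 2 * z / 2) • (A * (M * (A * A)) - A * (A * (M * A)))‖
      ≤ ‖A * (M * (A * A)) - A * (A * (M * A))‖ * ‖z‖ ^ 3 := by
    rw [norm_smul]
    have : ‖z ^ 2 * z / 2‖ ≤ ‖z‖ ^ 3 := by
      simp only [norm_div, norm_mul, norm_pow, Complex.norm_ofNat]
      nlinarith [norm_nonneg z, pow_nonneg (norm_nonneg z) 2]
    calc ‖z ^ 2 * z / 2‖ * ‖A * (M * (A * A)) - A * (A * (M * A))‖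
        ≤ ‖z‖ ^ 3 * ‖A * (M * (A * A)) - A * (A * (M * A))‖ :=
          mul_le_mul_of_nonneg_right this (norm_nonneg _)
      _ = ‖A * (M * (A * A)) - A * (A * (M * A))‖ * ‖z‖ ^ 3 := mul_comm _ _
  have b4 : ‖(z ^ 2 * z ^ 2 / 4) • (A * (A * (M * (A * A))))‖
      ≤ ‖A * (A * (M * (A * A)))‖ * ‖z‖ ^ 3 := by
    rw [norm_smul]
    have : ‖z ^ 2 * z ^ 2 / 4‖ ≤ ‖z‖ ^ 3 := by
      simp only [norm_div, norm_mul, norm_pow, Complex.norm_ofNat]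
      nlinarith [norm_nonneg z, pow_nonneg (norm_nonneg z) 2, pow_nonneg (norm_nonneg z) 3]
    calc ‖z ^ 2 * z ^ 2 / 4‖ * ‖A * (A * (M * (A * A)))‖
        ≤ ‖z‖ ^ 3 * ‖A * (A * (M * (A * A)))‖ :=
          mul_le_mul_of_nonneg_right this (norm_nonneg _)
      _ = ‖A * (A * (M * (A * A)))‖ * ‖z‖ ^ 3 := mul_comm _ _
  set X1 := (E - (1 + z • A + (z ^ 2 / 2) • (A * A))) * (M * E')
  set X2 := ((1 + z • A + (z ^ 2 / 2) • (A * A)) * M)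
      * (E' - (1 + (-z) • A + ((-z) ^ 2 / 2) • (A * A)))
  set X3 := (z ^ 2 * z / 2) • (A * (M * (A * A)) - A * (A * (M * A)))
  set X4 := (z ^ 2 * z ^ 2 / 4) • (A * (A * (M * (A * A))))
  calc ‖X1 + X2 + X3 + X4‖ ≤ ‖X1‖ + ‖X2‖ + ‖X3‖ + ‖X4‖ := by
        have h1 := norm_add_le (X1 + X2 + X3) X4
        have h2 := norm_add_le (X1 + X2) X3
        have h3 := norm_add_le X1 X2
        linarith
    _ ≤ K2 * ‖z‖ ^ 3 * (‖M‖ * K0) + (1 + ‖A‖ + ‖A‖ * ‖A‖) * ‖M‖ * (K2 * ‖z‖ ^ 3)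
        + ‖A * (M * (A * A)) - A * (A * (M * A))‖ * ‖z‖ ^ 3
        + ‖A * (A * (M * (A * A)))‖ * ‖z‖ ^ 3 := by linarith
    _ = (K2 * (‖M‖ * K0) + (1 + ‖A‖ + ‖A‖ * ‖A‖) * ‖M‖ * K2
        + ‖A * (M * (A * A)) - A * (A * (M * A))‖ + ‖A * (A * (M * (A * A)))‖) * ‖z‖ ^ 3 := by
        ring

private lemma assembly_id (W W' G CM D1 D2 K1 : Matrix (Bits n) (Bits n) ℂ) (zb zg : ℂ) :
    W * G * W' - (CM + zb • D1 + (zb ^ 2 / 2) • D2 + (zb * zg) • K1)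
      = W * (G - (CM + zb • D1 + (zb ^ 2 / 2) • D2)) * W'
        + (W * CM * W' - CM)
        + zb • (W * D1 * W' - (D1 + zg • K1))
        + (zb ^ 2 / 2) • (W * D2 * W' - D2) := by
  simp only [sub_mul, mul_sub, add_mul, mul_add, smul_mul_assoc, mul_smul_comm,
    smul_sub, smul_add, smul_smul, mul_assoc]
  module

private lemma main_mat (c : Bits n → ℝ) :
    ∃ K : ℝ, 0 ≤ K ∧ ∀ γ β : ℝ, |γ| ≤ 1 → |β| ≤ 1 →
      ‖exp ((Complex.I * (γ : ℂ)) • Cop c)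
          * (exp ((Complex.I * (β : ℂ)) • Bop n) * Cop c
              * exp ((-(Complex.I * (β : ℂ))) • Bop n))
          * exp ((-(Complex.I * (γ : ℂ))) • Cop c)
        - (Cop c + (Complex.I * (β : ℂ)) • gradB (Cop c)
            + ((Complex.I * (β : ℂ)) ^ 2 / 2) • gradB (gradB (Cop c))
            + ((Complex.I * (β : ℂ)) * (Complex.I * (γ : ℂ))) • gradC c (gradB (Cop c)))‖
      ≤ K * (|γ| + |β|) ^ 3 := by
  obtain ⟨Kb, hKb0, hKb⟩ := conj2 (Bop n) (Cop c)
  obtain ⟨Kcc, hKcc0, hKcc⟩ := conj2 (Cop c) (Cop c)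
  set D1 : Matrix (Bits n) (Bits n) ℂ := Bop n * Cop c - Cop c * Bop n with hD1
  set D2 : Matrix (Bits n) (Bits n) ℂ := Bop n * D1 - D1 * Bop n with hD2
  set K1 : Matrix (Bits n) (Bits n) ℂ := Cop c * D1 - D1 * Cop c with hK1
  obtain ⟨Kc1, hKc10, hKc1⟩ := conj1 (Cop c) D1
  obtain ⟨Kc0, hKc00, hKc0⟩ := conj0 (Cop c) D2
  obtain ⟨K0, hK00, hK0⟩ := exp_norm_le (Cop c)
  refine ⟨K0 * Kb * K0 + Kcc + Kc1 + Kc0, by positivity, fun γ β hγ hβ => ?_⟩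
  rw [show gradC c (gradB (Cop c)) = K1 from rfl, show gradB (gradB (Cop c)) = D2 from rfl,
    show gradB (Cop c) = D1 from rfl]
  set zg : ℂ := Complex.I * (γ : ℂ) with hzg_def
  set zb : ℂ := Complex.I * (β : ℂ) with hzb_def
  have hzgn : ‖zg‖ = |γ| := by
    rw [hzg_def, norm_mul, Complex.norm_I, one_mul, Complex.norm_real, Real.norm_eq_abs]
  have hzbn : ‖zb‖ = |β| := by
    rw [hzb_def, norm_mul, Complex.norm_I, one_mul, Complex.norm_real, Real.norm_eq_abs]
  have hzg1 : ‖zg‖ ≤ 1 := by rw [hzgn]; exact hγ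
  have hzb1 : ‖zb‖ ≤ 1 := by rw [hzbn]; exact hβ
  have hzg1' : ‖-zg‖ ≤ 1 := by rw [norm_neg]; exact hzg1
  have hzb1' : ‖-zb‖ ≤ 1 := by rw [norm_neg]; exact hzb1
  set W := exp (zg • Cop c) with hW
  set W' := exp ((-zg) • Cop c) with hW'
  set U := exp (zb • Bop n) with hU
  set U' := exp ((-zb) • Bop n) with hU'
  rw [assembly_id W W' (U * Cop c * U') (Cop c) D1 D2 K1 zb zg]
  have b1 : ‖W * ((U * Cop c * U') - (Cop c + zb • D1 + (zb ^ 2 / 2) • D2)) * W'‖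
      ≤ K0 * (Kb * |β| ^ 3) * K0 := by
    have hmid := hKb zb hzb1
    rw [hzbn] at hmid
    refine (norm_mul_le _ _).trans ?_
    refine mul_le_mul ?_ (hK0 _ hzg1') (norm_nonneg _) (by positivity)
    refine (norm_mul_le _ _).trans ?_
    exact mul_le_mul (hK0 _ hzg1) hmid (norm_nonneg _) hK00
  have b2 : ‖W * Cop c * W' - Cop c‖ ≤ Kcc * |γ| ^ 3 := by
    have h := hKcc zg hzg1
    rw [hzgn] at h
    have hz : Cop c * Cop c - Cop c * Cop c = 0 := sub_self _
    rw [hz] at h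
    simp only [mul_zero, zero_mul, smul_zero, add_zero, sub_zero] at h
    exact h
  have b3 : ‖zb • (W * D1 * W' - (D1 + zg • K1))‖ ≤ |β| * (Kc1 * |γ| ^ 2) := by
    rw [norm_smul, hzbn]
    refine mul_le_mul_of_nonneg_left ?_ (abs_nonneg β)
    have h := hKc1 zg hzg1
    rw [hzgn] at h
    exact h
  have b4 : ‖(zb ^ 2 / 2) • (W * D2 * W' - D2)‖ ≤ |β| ^ 2 * (Kc0 * |γ|) := by
    rw [norm_smul]
    have hsc : ‖zb ^ 2 / 2‖ ≤ |β| ^ 2 := by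
      rw [norm_div, norm_pow, hzbn]
      simp only [Complex.norm_ofNat]
      nlinarith [abs_nonneg β, sq_nonneg |β|]
    have h := hKc0 zg hzg1
    rw [hzgn] at h
    exact mul_le_mul hsc h (norm_nonneg _) (by positivity)
  set a := |γ| + |β| with ha
  have hβa : |β| ≤ a := by rw [ha]; linarith [abs_nonneg γ]
  have hγa : |γ| ≤ a := by rw [ha]; linarith [abs_nonneg β]
  have hβ3 : |β| ^ 3 ≤ a ^ 3 := pow_le_pow_left₀ (abs_nonneg β) hβa 3
  have hγ3 : |γ| ^ 3 ≤ a ^ 3 := pow_le_pow_left₀ (abs_nonneg γ) hγa 3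
  have hβγ2 : |β| * |γ| ^ 2 ≤ a ^ 3 := by
    calc |β| * |γ| ^ 2 ≤ a * a ^ 2 :=
          mul_le_mul hβa (pow_le_pow_left₀ (abs_nonneg γ) hγa 2) (by positivity) (by positivity)
      _ = a ^ 3 := by ring
  have hβ2γ : |β| ^ 2 * |γ| ≤ a ^ 3 := by
    calc |β| ^ 2 * |γ| ≤ a ^ 2 * a :=
          mul_le_mul (pow_le_pow_left₀ (abs_nonneg β) hβa 2) hγa (abs_nonneg γ) (by positivity)
      _ = a ^ 3 := by ring
  have e1 : K0 * (Kb * |β| ^ 3) * K0 ≤ K0 * Kb * K0 * a ^ 3 := by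
    have heq : K0 * (Kb * |β| ^ 3) * K0 = K0 * Kb * K0 * |β| ^ 3 := by ring
    rw [heq]
    exact mul_le_mul_of_nonneg_left hβ3 (by positivity)
  have e2 : Kcc * |γ| ^ 3 ≤ Kcc * a ^ 3 := mul_le_mul_of_nonneg_left hγ3 hKcc0
  have e3 : |β| * (Kc1 * |γ| ^ 2) ≤ Kc1 * a ^ 3 := by
    have heq : |β| * (Kc1 * |γ| ^ 2) = Kc1 * (|β| * |γ| ^ 2) := by ring
    rw [heq]
    exact mul_le_mul_of_nonneg_left hβγ2 hKc10
  have e4 : |β| ^ 2 * (Kc0 * |γ|) ≤ Kc0 * a ^ 3 := by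
    have heq : |β| ^ 2 * (Kc0 * |γ|) = Kc0 * (|β| ^ 2 * |γ|) := by ring
    rw [heq]
    exact mul_le_mul_of_nonneg_left hβ2γ hKc00
  set T1 := W * ((U * Cop c * U') - (Cop c + zb • D1 + (zb ^ 2 / 2) • D2)) * W'
  set T2 := W * Cop c * W' - Cop c
  set T3 := zb • (W * D1 * W' - (D1 + zg • K1))
  set T4 := (zb ^ 2 / 2) • (W * D2 * W' - D2)
  calc ‖T1 + T2 + T3 + T4‖ ≤ ‖T1‖ + ‖T2‖ + ‖T3‖ + ‖T4‖ := by
        have h1 := norm_add_le (T1 + T2 + T3) T4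
        have h2 := norm_add_le (T1 + T2) T3
        have h3 := norm_add_le T1 T2
        linarith
    _ ≤ K0 * Kb * K0 * a ^ 3 + Kcc * a ^ 3 + Kc1 * a ^ 3 + Kc0 * a ^ 3 := by linarith
    _ = (K0 * Kb * K0 + Kcc + Kc1 + Kc0) * a ^ 3 := by ring

private lemma flipBit_flipBit (j : Fin n) (x : Bits n) : flipBit j (flipBit j x) = x := by
  funext k
  by_cases hk : k = j
  · subst hk; simp [flipBit, Function.update_apply]
  · simp [flipBit, Function.update_apply, hk]

private lemma Xop_ct (j : Fin n) : (Xop j)ᴴ = Xop j := by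
  ext x y
  have hiff : (x = flipBit j y) ↔ (y = flipBit j x) :=
    ⟨fun h => by rw [h, flipBit_flipBit], fun h => by rw [h, flipBit_flipBit]⟩
  simp only [conjTranspose_apply, Xop, hiff]
  split <;> simp

private lemma Bop_ct : (Bop n)ᴴ = Bop n := by
  unfold Bop
  rw [Matrix.conjTranspose_sum]
  exact Finset.sum_congr rfl fun j _ => Xop_ct j

private lemma Cop_ct (c : Bits n → ℝ) : (Cop c)ᴴ = Cop c := by
  unfold Cop
  rw [Matrix.diagonal_conjTranspose]
  have h : (star fun x : Bits n => ((c x : ℂ))) = fun x : Bits n => ((c x : ℂ)) :=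
    funext fun x => Complex.conj_ofReal (c x)
  rw [h]

private lemma star_scalar (r : ℝ) : star (-(Complex.I * (r : ℂ))) = Complex.I * (r : ℂ) := by
  rw [star_neg]
  rw [show star (Complex.I * (r : ℂ)) = (starRingEnd ℂ) (Complex.I * (r : ℂ)) from rfl]
  rw [_root_.map_mul, Complex.conj_I, Complex.conj_ofReal]
  ring

private lemma Qaoa1_ct (c : Bits n → ℝ) (γ β : ℝ) :
    (Qaoa1 c γ β)ᴴ = exp ((Complex.I * (γ : ℂ)) • Cop c)
      * exp ((Complex.I * (β : ℂ)) • Bop n) := by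
  unfold Qaoa1
  rw [Matrix.conjTranspose_mul, ← Matrix.exp_conjTranspose, ← Matrix.exp_conjTranspose,
    Matrix.conjTranspose_smul, Matrix.conjTranspose_smul, Bop_ct, Cop_ct,
    star_scalar, star_scalar]

private lemma dot_reduce (c : Bits n → ℝ) (γ β : ℝ) (ψ : Bits n → ℂ) :
    star (Qaoa1 c γ β *ᵥ ψ) ⬝ᵥ (Cop c *ᵥ (Qaoa1 c γ β *ᵥ ψ))
      = star ψ ⬝ᵥ ((exp ((Complex.I * (γ : ℂ)) • Cop c)
          * (exp ((Complex.I * (β : ℂ)) • Bop n) * Cop c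
              * exp ((-(Complex.I * (β : ℂ))) • Bop n))
          * exp ((-(Complex.I * (γ : ℂ))) • Cop c)) *ᵥ ψ) := by
  rw [Matrix.star_mulVec, ← Matrix.dotProduct_mulVec]
  simp only [Matrix.mulVec_mulVec]
  congr 1
  rw [Qaoa1_ct]
  unfold Qaoa1
  simp only [mul_assoc]

private lemma L_bound (ψ : Bits n → ℂ) :
    ∃ K : ℝ, 0 ≤ K ∧ ∀ M : Matrix (Bits n) (Bits n) ℂ,
      |(star ψ ⬝ᵥ (M *ᵥ ψ)).re| ≤ K * ‖M‖ := by
  refine ⟨(∑ x : Bits n, ‖ψ x‖) * ‖ψ‖, by positivity, fun M => ?_⟩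
  have h1 : |(star ψ ⬝ᵥ (M *ᵥ ψ)).re| ≤ ‖star ψ ⬝ᵥ (M *ᵥ ψ)‖ := Complex.abs_re_le_norm _
  refine h1.trans ?_
  calc ‖star ψ ⬝ᵥ (M *ᵥ ψ)‖ ≤ ∑ x : Bits n, ‖star ψ x * (M *ᵥ ψ) x‖ := norm_sum_le _ _
    _ = ∑ x : Bits n, ‖ψ x‖ * ‖(M *ᵥ ψ) x‖ := by
        refine Finset.sum_congr rfl fun x _ => ?_
        rw [norm_mul, Pi.star_apply, norm_star]
    _ ≤ ∑ x : Bits n, ‖ψ x‖ * (‖M‖ * ‖ψ‖) := by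
        refine Finset.sum_le_sum fun x _ => ?_
        refine mul_le_mul_of_nonneg_left ?_ (norm_nonneg _)
        exact (norm_le_pi_norm (M *ᵥ ψ) x).trans (Matrix.linfty_opNorm_mulVec M ψ)
    _ = (∑ x : Bits n, ‖ψ x‖) * ‖ψ‖ * ‖M‖ := by rw [← Finset.sum_mul]; ring
private lemma re_identity (γ β : ℝ) (w0 wC w1 w2 w3 : ℂ) :
    w0.re - wC.re - β * (Complex.I * w1).re + β ^ 2 / 2 * w2.re + γ * β * w3.re
      = (w0 - (wC + (Complex.I * (β : ℂ)) * w1 + ((Complex.I * (β : ℂ)) ^ 2 / 2) * w2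
          + ((Complex.I * (β : ℂ)) * (Complex.I * (γ : ℂ))) * w3)).re := by
  have hs1 : (Complex.I * (β : ℂ)) * w1 = ((β : ℝ) : ℂ) * (Complex.I * w1) := by ring
  have hs2 : (Complex.I * (β : ℂ)) ^ 2 / 2 = ((-(β ^ 2 / 2) : ℝ) : ℂ) := by
    rw [mul_pow, Complex.I_sq]
    push_cast
    ring
  have hs3 : (Complex.I * (β : ℂ)) * (Complex.I * (γ : ℂ)) = ((-(β * γ) : ℝ) : ℂ) := by
    rw [show (Complex.I * (β : ℂ)) * (Complex.I * (γ : ℂ))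
        = Complex.I ^ 2 * ((β : ℂ) * (γ : ℂ)) by ring, Complex.I_sq]
    push_cast
    ring
  rw [hs1, hs2, hs3]
  simp only [Complex.sub_re, Complex.add_re, Complex.re_ofReal_mul]
  ring

theorem stmt18 (n : ℕ) (hn : 1 ≤ n) (c : Bits n → ℝ) (ψ : Bits n → ℂ)
    (hψ : ∑ x : Bits n, ‖ψ x‖ ^ 2 = 1) :
    (fun p : ℝ × ℝ =>
        (star (Qaoa1 c p.1 p.2 *ᵥ ψ) ⬝ᵥ (Cop c *ᵥ (Qaoa1 c p.1 p.2 *ᵥ ψ))).re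
          - (star ψ ⬝ᵥ (Cop c *ᵥ ψ)).re
          - p.2 * (star ψ ⬝ᵥ ((Complex.I • gradB (Cop c)) *ᵥ ψ)).re
          + p.2 ^ 2 / 2 * (star ψ ⬝ᵥ (gradB (gradB (Cop c)) *ᵥ ψ)).re
          + p.1 * p.2 * (star ψ ⬝ᵥ (gradC c (gradB (Cop c)) *ᵥ ψ)).re)
      =O[nhds ((0 : ℝ), (0 : ℝ))] fun p : ℝ × ℝ => (|p.1| + |p.2|) ^ 3 := by
  classical
  obtain ⟨Km, hKm0, hKm⟩ := main_mat c
  obtain ⟨Kψ, hKψ0, hKψ⟩ := L_bound ψ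
  rw [Asymptotics.isBigO_iff]
  refine ⟨Kψ * Km, ?_⟩
  have h1 : ∀ᶠ p : ℝ × ℝ in nhds ((0 : ℝ), (0 : ℝ)), |p.1| < 1 := by
    have hc : Continuous fun p : ℝ × ℝ => |p.1| := continuous_fst.abs
    exact (hc.tendsto ((0 : ℝ), (0 : ℝ))).eventually_lt_const (by norm_num)
  have h2 : ∀ᶠ p : ℝ × ℝ in nhds ((0 : ℝ), (0 : ℝ)), |p.2| < 1 := by
    have hc : Continuous fun p : ℝ × ℝ => |p.2| := continuous_snd.abs
    exact (hc.tendsto ((0 : ℝ), (0 : ℝ))).eventually_lt_const (by norm_num)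
  filter_upwards [h1, h2] with p hp1 hp2
  set TT := exp ((Complex.I * (p.1 : ℂ)) • Cop c)
      * (exp ((Complex.I * (p.2 : ℂ)) • Bop n) * Cop c
          * exp ((-(Complex.I * (p.2 : ℂ))) • Bop n))
      * exp ((-(Complex.I * (p.1 : ℂ))) • Cop c) with hTT
  set PP := Cop c + (Complex.I * (p.2 : ℂ)) • gradB (Cop c)
      + ((Complex.I * (p.2 : ℂ)) ^ 2 / 2) • gradB (gradB (Cop c))
      + ((Complex.I * (p.2 : ℂ)) * (Complex.I * (p.1 : ℂ))) • gradC c (gradB (Cop c)) with hPP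
  have heq : (star (Qaoa1 c p.1 p.2 *ᵥ ψ) ⬝ᵥ (Cop c *ᵥ (Qaoa1 c p.1 p.2 *ᵥ ψ))).re
      - (star ψ ⬝ᵥ (Cop c *ᵥ ψ)).re
      - p.2 * (star ψ ⬝ᵥ ((Complex.I • gradB (Cop c)) *ᵥ ψ)).re
      + p.2 ^ 2 / 2 * (star ψ ⬝ᵥ (gradB (gradB (Cop c)) *ᵥ ψ)).re
      + p.1 * p.2 * (star ψ ⬝ᵥ (gradC c (gradB (Cop c)) *ᵥ ψ)).re
      = (star ψ ⬝ᵥ ((TT - PP) *ᵥ ψ)).re := by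
    rw [dot_reduce c p.1 p.2 ψ, ← hTT, hPP]
    simp only [Matrix.sub_mulVec, Matrix.add_mulVec, Matrix.smul_mulVec,
      dotProduct_sub, dotProduct_add, dotProduct_smul, smul_eq_mul]
    exact re_identity p.1 p.2 _ _ _ _ _
  rw [heq]
  have hb : ‖TT - PP‖ ≤ Km * (|p.1| + |p.2|) ^ 3 := by
    rw [hTT, hPP]
    exact hKm p.1 p.2 hp1.le hp2.le
  rw [Real.norm_eq_abs]
  calc |(star ψ ⬝ᵥ ((TT - PP) *ᵥ ψ)).re| ≤ Kψ * ‖TT - PP‖ := hKψ _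
    _ ≤ Kψ * (Km * (|p.1| + |p.2|) ^ 3) := mul_le_mul_of_nonneg_left hb hKψ0
    _ = Kψ * Km * ‖(|p.1| + |p.2|) ^ 3‖ := by
        have hnn : (0 : ℝ) ≤ (|p.1| + |p.2|) ^ 3 := by positivity
        rw [Real.norm_eq_abs, abs_of_nonneg hnn]
        ring


end Stmt18Aux
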